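/- Let G ∈ ℝ^{n×n} and let P ∈ ℝ^{n×n} be symmetric positive definite with PG + GᵀP ≻ 0. Define ‖y‖_P = √(yᵀPy). Then: (i) for every x ∈ ℝ^n \ {0} there exists a unique s_x ∈ ℝ such that ‖exp(−s_x G)x‖_P = 1; (ii) for all x ≠ 0 and all t ∈ ℝ, s_{exp(tG)x} = s_x + t; (iii) the canonical homogeneous norm ‖x‖_d := e^{s_x} (with ‖0‖_d := 0) is continuous on ℝ^n, i.e. it is continuous on ℝ^n \ {0} and ‖x‖_d → 0 as x → 0. -/

import Mathlib

/-
Statement 4: well-posedness, homogeneity and continuity of the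
canonical homogeneous norm induced by ‖·‖_P and the dilation d(s) = exp(sG).
-/

open Matrix
open scoped Classical

/-- The weighted Euclidean norm ‖x‖_P = √(xᵀPx). -/
noncomputable def wnorm {ι : Type*} [Fintype ι] (P : Matrix ι ι ℝ) (x : ι → ℝ) : ℝ :=
  Real.sqrt (x ⬝ᵥ P.mulVec x)

namespace CanonAux

variable {n : ℕ}

lemma qform_smul (Q : Matrix (Fin n) (Fin n) ℝ) (a : ℝ) (u : Fin n → ℝ) :
    (a • u) ⬝ᵥ Q.mulVec (a • u) = a * a * (u ⬝ᵥ Q.mulVec u) := by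
  rw [Matrix.mulVec_smul, smul_dotProduct, dotProduct_smul]
  simp [smul_eq_mul]; ring

lemma cont_qform (Q : Matrix (Fin n) (Fin n) ℝ) :
    Continuous (fun y : Fin n → ℝ => y ⬝ᵥ Q.mulVec y) := by
  simp only [dotProduct, mulVec, dotProduct]; fun_prop

lemma posdef_bounds (hn : 0 < n) (Q : Matrix (Fin n) (Fin n) ℝ) (hQ : Q.PosDef) :
    ∃ c C : ℝ, 0 < c ∧ 0 < C ∧
      ∀ y : Fin n → ℝ, c * ‖y‖ ^ 2 ≤ y ⬝ᵥ Q.mulVec y ∧ y ⬝ᵥ Q.mulVec y ≤ C * ‖y‖ ^ 2 := by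
  haveI : Nonempty (Fin n) := ⟨⟨0, hn⟩⟩
  have hcont := cont_qform Q
  have hpos : ∀ y : Fin n → ℝ, y ≠ 0 → 0 < y ⬝ᵥ Q.mulVec y := by
    intro y hy; simpa using hQ.dotProduct_mulVec_pos hy
  have hsph : (Metric.sphere (0 : Fin n → ℝ) 1).Nonempty :=
    NormedSpace.sphere_nonempty.2 zero_le_one
  have hcpt : IsCompact (Metric.sphere (0 : Fin n → ℝ) 1) := isCompact_sphere 0 1
  obtain ⟨ymin, hymin, hmin⟩ := hcpt.exists_isMinOn hsph hcont.continuousOn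
  obtain ⟨ymax, hymax, hmax⟩ := hcpt.exists_isMaxOn hsph hcont.continuousOn
  have hymin0 : ymin ≠ 0 := by
    intro h; rw [Metric.mem_sphere, h] at hymin; simp at hymin
  have hymax0 : ymax ≠ 0 := by
    intro h; rw [Metric.mem_sphere, h] at hymax; simp at hymax
  refine ⟨_, _, hpos ymin hymin0, hpos ymax hymax0, fun y => ?_⟩
  rcases eq_or_ne y 0 with rfl | hy
  · simp
  · have hny : ‖y‖ ≠ 0 := norm_ne_zero_iff.2 hy
    set u : Fin n → ℝ := ‖y‖⁻¹ • y with hu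
    have husph : u ∈ Metric.sphere (0 : Fin n → ℝ) 1 := by
      simp [hu, norm_smul, abs_of_nonneg (inv_nonneg.2 (norm_nonneg y)),
        inv_mul_cancel₀ hny]
    have hyu : y = ‖y‖ • u := by rw [hu, smul_inv_smul₀ hny]
    have h1 : ymin ⬝ᵥ Q.mulVec ymin ≤ u ⬝ᵥ Q.mulVec u := hmin husph
    have h2 : u ⬝ᵥ Q.mulVec u ≤ ymax ⬝ᵥ Q.mulVec ymax := hmax husph
    have hq : y ⬝ᵥ Q.mulVec y = ‖y‖ ^ 2 * (u ⬝ᵥ Q.mulVec u) := by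
      conv_lhs => rw [hyu]
      rw [qform_smul]; ring
    have hn2 : (0:ℝ) < ‖y‖ ^ 2 := by positivity
    constructor
    · rw [hq]; nlinarith
    · rw [hq]; nlinarith

noncomputable def mulVecCLM (x : Fin n → ℝ) :
    Matrix (Fin n) (Fin n) ℝ →L[ℝ] (Fin n → ℝ) :=
  LinearMap.toContinuousLinearMap
    { toFun := fun M => M.mulVec x
      map_add' := fun A B => Matrix.add_mulVec A B x
      map_smul' := fun c A => by ext i; simp [Matrix.smul_mulVec] }

lemma hasDerivAt_y (G : Matrix (Fin n) (Fin n) ℝ) (x : Fin n → ℝ) (s : ℝ) :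
    HasDerivAt (fun s : ℝ => (NormedSpace.exp ((-s) • G)).mulVec x)
      (-(NormedSpace.exp ((-s) • G) * G).mulVec x) s := by
  letI : NormedAddCommGroup (Matrix (Fin n) (Fin n) ℝ) := Matrix.linftyOpNormedAddCommGroup
  letI : NormedRing (Matrix (Fin n) (Fin n) ℝ) := Matrix.linftyOpNormedRing
  letI : NormedAlgebra ℝ (Matrix (Fin n) (Fin n) ℝ) := Matrix.linftyOpNormedAlgebra
  have hE : HasDerivAt (fun s : ℝ => NormedSpace.exp ((-s) • G))
      ((-1 : ℝ) • (NormedSpace.exp ((-s) • G) * G)) s := by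
    have h := hasDerivAt_exp_smul_const (𝕂 := ℝ) G (-s)
    have hn : HasDerivAt (fun u : ℝ => -u) (-1 : ℝ) s := (hasDerivAt_id s).neg
    exact h.scomp s hn
  have := (mulVecCLM x).hasFDerivAt.comp_hasDerivAt s hE
  rw [← Matrix.neg_mulVec]
  simp only [neg_smul, one_smul, Function.comp_def] at this ⊢
  exact this

lemma hasDerivAt_qform (A : Matrix (Fin n) (Fin n) ℝ)
    {u v : ℝ → (Fin n → ℝ)} {u' v' : Fin n → ℝ} {s : ℝ}
    (hu : HasDerivAt u u' s) (hv : HasDerivAt v v' s) :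
    HasDerivAt (fun s => u s ⬝ᵥ A.mulVec (v s))
      (u' ⬝ᵥ A.mulVec (v s) + u s ⬝ᵥ A.mulVec v') s := by
  have hui : ∀ i, HasDerivAt (fun s => u s i) (u' i) s := fun i => (hasDerivAt_pi.1 hu) i
  have hvi : ∀ i, HasDerivAt (fun s => v s i) (v' i) s := fun i => (hasDerivAt_pi.1 hv) i
  simp only [dotProduct, mulVec, dotProduct]
  have : ∀ i : Fin n, HasDerivAt (fun s => u s i * ∑ j, A i j * v s j)
      (u' i * (∑ j, A i j * v s j) + u s i * ∑ j, A i j * v' j) s := by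
    intro i
    exact (hui i).mul (HasDerivAt.fun_sum (fun j _ => (hvi j).const_mul (A i j)))
  have h := HasDerivAt.fun_sum (fun i (_ : i ∈ Finset.univ) => this i)
  simpa [Finset.sum_add_distrib] using h

/-- The squared weighted norm along the dilation orbit. -/
noncomputable def Vf (G P : Matrix (Fin n) (Fin n) ℝ) (x : Fin n → ℝ) (s : ℝ) : ℝ :=
  ((NormedSpace.exp ((-s) • G)).mulVec x) ⬝ᵥ
    P.mulVec ((NormedSpace.exp ((-s) • G)).mulVec x)

lemma expMulVec_ne_zero (G : Matrix (Fin n) (Fin n) ℝ) {x : Fin n → ℝ} (hx : x ≠ 0) (s : ℝ) :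
    (NormedSpace.exp ((-s) • G)).mulVec x ≠ 0 := by
  intro h
  have hc : Commute (s • G) ((-s) • G) := ((Commute.refl G).smul_left s).smul_right (-s)
  have h1 : NormedSpace.exp (s • G) * NormedSpace.exp ((-s) • G) = 1 := by
    rw [← Matrix.exp_add_of_commute _ _ hc]
    have : s • G + (-s) • G = 0 := by rw [← add_smul]; simp
    rw [this, NormedSpace.exp_zero]
  apply hx
  calc x = (NormedSpace.exp (s • G) * NormedSpace.exp ((-s) • G)).mulVec x := by
        rw [h1, Matrix.one_mulVec]
    _ = (NormedSpace.exp (s • G)).mulVec ((NormedSpace.exp ((-s) • G)).mulVec x) := by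
        rw [Matrix.mulVec_mulVec]
    _ = 0 := by rw [h, Matrix.mulVec_zero]

lemma Vf_pos {G P : Matrix (Fin n) (Fin n) ℝ} (hP : P.PosDef) {x : Fin n → ℝ}
    (hx : x ≠ 0) (s : ℝ) : 0 < Vf G P x s := by
  have h := hP.dotProduct_mulVec_pos (expMulVec_ne_zero G hx s)
  rw [star_trivial] at h
  exact h

lemma qform_deriv_alg (G P : Matrix (Fin n) (Fin n) ℝ) (hP : Pᵀ = P) (y : Fin n → ℝ) :
    (-(G.mulVec y)) ⬝ᵥ P.mulVec y + y ⬝ᵥ P.mulVec (-(G.mulVec y))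
      = -(y ⬝ᵥ (P * G + Gᵀ * P).mulVec y) := by
  have h1 : y ⬝ᵥ (P * G).mulVec y = y ⬝ᵥ P.mulVec (G.mulVec y) := by
    rw [Matrix.mulVec_mulVec]
  have h2 : y ⬝ᵥ (Gᵀ * P).mulVec y = (G.mulVec y) ⬝ᵥ P.mulVec y := by
    rw [← Matrix.mulVec_mulVec, Matrix.dotProduct_mulVec y Gᵀ, Matrix.vecMul_transpose]
  rw [Matrix.add_mulVec, dotProduct_add, h1, h2]
  rw [neg_dotProduct, Matrix.mulVec_neg, dotProduct_neg]
  ring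

lemma hasDerivAt_Vf (G P : Matrix (Fin n) (Fin n) ℝ) (hP : Pᵀ = P) (x : Fin n → ℝ) (s : ℝ) :
    HasDerivAt (Vf G P x)
      (-(((NormedSpace.exp ((-s) • G)).mulVec x) ⬝ᵥ
        (P * G + Gᵀ * P).mulVec ((NormedSpace.exp ((-s) • G)).mulVec x))) s := by
  have hcomm : NormedSpace.exp ((-s) • G) * G = G * NormedSpace.exp ((-s) • G) := by
    have : Commute (NormedSpace.exp ((-s) • G)) G :=
      ((Commute.refl G).smul_left (-s)).exp_left
    exact this.eq
  have hyd : HasDerivAt (fun s : ℝ => (NormedSpace.exp ((-s) • G)).mulVec x)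
      (-(G.mulVec ((NormedSpace.exp ((-s) • G)).mulVec x))) s := by
    have h := hasDerivAt_y G x s
    rw [hcomm, ← Matrix.mulVec_mulVec] at h
    exact h
  have h := hasDerivAt_qform P hyd hyd
  rw [qform_deriv_alg G P hP] at h
  exact h

end CanonAux

open CanonAux

theorem canonical_homogeneous_norm_well_posed
    (n : ℕ) (hn : 0 < n)
    (G P : Matrix (Fin n) (Fin n) ℝ)
    (hP : P.PosDef)
    (hPG : (P * G + Gᵀ * P).PosDef) :
    -- (i) existence and uniqueness of s_x for x ≠ 0
    (∀ x : Fin n → ℝ, x ≠ 0 →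
      ∃! s : ℝ, wnorm P ((NormedSpace.exp ((-s) • G)).mulVec x) = 1) ∧
    -- for any function x ↦ s_x realizing the defining property:
    ∀ sfun : (Fin n → ℝ) → ℝ,
      (∀ x, x ≠ 0 → wnorm P ((NormedSpace.exp ((-(sfun x)) • G)).mulVec x) = 1) →
      -- (ii) s_{d(t)x} = s_x + t
      ((∀ x : Fin n → ℝ, x ≠ 0 → ∀ t : ℝ,
          sfun ((NormedSpace.exp (t • G)).mulVec x) = sfun x + t) ∧
      -- (iii) continuity of the canonical homogeneous norm ‖x‖_d = e^{s_x}, ‖0‖_d = 0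
        Continuous (fun x : Fin n → ℝ =>
          if x = 0 then (0 : ℝ) else Real.exp (sfun x))) := by
  -- constants
  obtain ⟨cP, CP, hcP, hCP, hPb⟩ := posdef_bounds hn P hP
  obtain ⟨cQ, CQ, hcQ, hCQ, hQb⟩ := posdef_bounds hn (P * G + Gᵀ * P) hPG
  set α : ℝ := cQ / CP with hα
  set β : ℝ := CQ / cP with hβ
  have hα0 : 0 < α := div_pos hcQ hCP
  have hβ0 : 0 < β := div_pos hCQ hcP
  -- the log of the squared norm along the orbit
  set W : (Fin n → ℝ) → ℝ → ℝ := fun x s => Real.log (Vf G P x s) with hW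
  -- derivative bounds for W
  have hWd : ∀ x : Fin n → ℝ, x ≠ 0 → ∀ s : ℝ,
      ∃ w : ℝ, HasDerivAt (W x) w s ∧ w ≤ -α ∧ -β ≤ w := by
    intro x hx s
    set y : Fin n → ℝ := (NormedSpace.exp ((-s) • G)).mulVec x with hy
    have hy0 : y ≠ 0 := expMulVec_ne_zero G hx s
    have hV := hasDerivAt_Vf G P hP.1 x s
    have hVpos : 0 < Vf G P x s := Vf_pos hP hx s
    have hlog := hV.log (ne_of_gt hVpos)
    refine ⟨_, hlog, ?_, ?_⟩
    · -- -(q/V) ≤ -α : α V ≤ q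
      rw [neg_div, neg_le_neg_iff, le_div_iff₀ hVpos]
      have h1 : Vf G P x s ≤ CP * ‖y‖ ^ 2 := (hPb y).2
      have h2 : cQ * ‖y‖ ^ 2 ≤ y ⬝ᵥ (P * G + Gᵀ * P).mulVec y := (hQb y).1
      have : α * (CP * ‖y‖ ^ 2) = cQ * ‖y‖ ^ 2 := by
        rw [hα]; field_simp
      nlinarith [mul_le_mul_of_nonneg_left h1 (le_of_lt hα0)]
    · -- -β ≤ -(q/V) : q ≤ β V
      rw [neg_div, neg_le_neg_iff, div_le_iff₀ hVpos]
      have h1 : cP * ‖y‖ ^ 2 ≤ Vf G P x s := (hPb y).1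
      have h2 : y ⬝ᵥ (P * G + Gᵀ * P).mulVec y ≤ CQ * ‖y‖ ^ 2 := (hQb y).2
      have : β * (cP * ‖y‖ ^ 2) = CQ * ‖y‖ ^ 2 := by
        rw [hβ]; field_simp
      nlinarith [mul_le_mul_of_nonneg_left h1 (le_of_lt hβ0)]
  -- basic consequences
  have hWdiff : ∀ x, x ≠ 0 → Differentiable ℝ (W x) := by
    intro x hx s
    obtain ⟨w, hw, -, -⟩ := hWd x hx s
    exact hw.differentiableAt
  have hWanti : ∀ x, x ≠ 0 → StrictAnti (W x) := by
    intro x hx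
    apply strictAnti_of_deriv_neg
    intro s
    obtain ⟨w, hw, hw1, -⟩ := hWd x hx s
    rw [hw.deriv]
    linarith
  have hWg : ∀ x, x ≠ 0 → Antitone (fun s => W x s + α * s) := by
    intro x hx
    apply antitone_of_deriv_nonpos
    · exact fun s => ((hWdiff x hx s).add ((differentiable_id.const_mul α) s))
    · intro s
      obtain ⟨w, hw, hw1, -⟩ := hWd x hx s
      have hlin : HasDerivAt (fun s : ℝ => α * s) α s := by
        simpa using (hasDerivAt_id s).const_mul α
      rw [(hw.fun_add hlin).deriv]
      linarith
  have hWh : ∀ x, x ≠ 0 → Monotone (fun s => W x s + β * s) := by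
    intro x hx
    apply monotone_of_deriv_nonneg
    · exact fun s => ((hWdiff x hx s).add ((differentiable_id.const_mul β) s))
    · intro s
      obtain ⟨w, hw, -, hw2⟩ := hWd x hx s
      have hlin : HasDerivAt (fun s : ℝ => β * s) β s := by
        simpa using (hasDerivAt_id s).const_mul β
      rw [(hw.fun_add hlin).deriv]
      linarith
  -- equivalence between the defining equation and W x s = 0
  have hiff : ∀ x : Fin n → ℝ, x ≠ 0 → ∀ s : ℝ,
      (wnorm P ((NormedSpace.exp ((-s) • G)).mulVec x) = 1 ↔ W x s = 0) := by
    intro x hx s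
    have hVpos : 0 < Vf G P x s := Vf_pos hP hx s
    constructor
    · intro h
      rw [wnorm] at h
      have : Vf G P x s = 1 := Real.sqrt_eq_one.1 h
      rw [hW]; simp only
      rw [this, Real.log_one]
    · intro h
      have : Vf G P x s = 1 := by
        have := Real.exp_log hVpos
        rw [hW] at h; simp only at h
        rw [h, Real.exp_zero] at this
        exact this.symm
      rw [wnorm]
      rw [show ((NormedSpace.exp ((-s) • G)).mulVec x ⬝ᵥ
        P.mulVec ((NormedSpace.exp ((-s) • G)).mulVec x)) = Vf G P x s from rfl, this]
      exact Real.sqrt_one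
  -- existence and uniqueness
  have huniq : ∀ x : Fin n → ℝ, x ≠ 0 →
      ∃! s : ℝ, wnorm P ((NormedSpace.exp ((-s) • G)).mulVec x) = 1 := by
    intro x hx
    -- existence via IVT
    set R : ℝ := (|W x 0| + 1) / α with hR
    have hR0 : 0 < R := div_pos (by positivity) hα0
    have hWup : W x R < 0 := by
      have := hWg x hx (le_of_lt hR0)
      simp only at this
      have hRα : α * R = |W x 0| + 1 := by
        rw [hR]; field_simp
      have habs : W x 0 ≤ |W x 0| := le_abs_self _
      -- W x R + α R ≤ W x 0 + α * 0
      simp only [mul_zero, add_zero] at this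
      nlinarith
    have hWlo : 0 < W x (-R) := by
      have := hWg x hx (show -R ≤ (0:ℝ) by linarith)
      simp only [mul_zero, add_zero, mul_neg] at this
      have hRα : α * R = |W x 0| + 1 := by
        rw [hR]; field_simp
      have habs : -|W x 0| ≤ W x 0 := neg_abs_le _
      nlinarith
    have hcont : ContinuousOn (W x) (Set.Icc (-R) R) :=
      ((hWdiff x hx).continuous).continuousOn
    have hmem : (0:ℝ) ∈ Set.Icc (W x R) (W x (-R)) :=
      ⟨le_of_lt hWup, le_of_lt hWlo⟩
    have hsub := intermediate_value_Icc' (show -R ≤ R by linarith) hcont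
    obtain ⟨s, hs, hWs⟩ := hsub hmem
    refine ⟨s, (hiff x hx s).2 hWs, ?_⟩
    intro t ht
    have hWt : W x t = 0 := (hiff x hx t).1 ht
    exact (hWanti x hx).injective (by rw [hWt, hWs])
  refine ⟨huniq, ?_⟩
  intro sfun hsfun
  -- characterization and strict monotonicity facts wrt sfun
  have hWzero : ∀ x, x ≠ 0 → W x (sfun x) = 0 := fun x hx => (hiff x hx _).1 (hsfun x hx)
  constructor
  · -- (ii)
    intro x hx t
    set x' : Fin n → ℝ := (NormedSpace.exp (t • G)).mulVec x with hx'
    have hx'0 : x' ≠ 0 := by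
      intro h
      apply expMulVec_ne_zero G (x := x) hx (-t)
      rw [show ((-(-t)) • G) = t • G by simp]  -- align
      exact h
    have key : (NormedSpace.exp ((-(sfun x + t)) • G)).mulVec x'
        = (NormedSpace.exp ((-(sfun x)) • G)).mulVec x := by
      rw [hx', Matrix.mulVec_mulVec, ← Matrix.exp_add_of_commute]
      · rw [← add_smul]
        norm_num
      · exact ((Commute.refl G).smul_left _).smul_right _
    have hsat : wnorm P ((NormedSpace.exp ((-(sfun x + t)) • G)).mulVec x') = 1 := by
      rw [key]; exact hsfun x hx
    obtain ⟨s₀, hs₀, huq⟩ := huniq x' hx'0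
    have e1 : sfun x' = s₀ := huq _ (hsfun x' hx'0)
    have e2 : sfun x + t = s₀ := huq _ hsat
    rw [e1, e2]
  · -- (iii)
    rw [continuous_iff_continuousAt]
    intro x₀
    rcases eq_or_ne x₀ 0 with rfl | hx₀
    · -- continuity at 0
      have h0 : (if (0 : Fin n → ℝ) = 0 then (0:ℝ) else Real.exp (sfun 0)) = 0 := if_pos rfl
      rw [ContinuousAt, h0, Metric.tendsto_nhds]
      intro ε hε
      -- open condition
      have hVcont : Continuous (fun x : Fin n → ℝ => Vf G P x 0) := by
        simp only [Vf, dotProduct, mulVec, dotProduct]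
        fun_prop
      set δ : ℝ := min (Real.exp (β * Real.log ε)) 1 with hδ
      have hδ0 : 0 < δ := lt_min (Real.exp_pos _) one_pos
      have hU : IsOpen {x : Fin n → ℝ | Vf G P x 0 < δ} :=
        isOpen_lt hVcont continuous_const
      have h0U : (0 : Fin n → ℝ) ∈ {x : Fin n → ℝ | Vf G P x 0 < δ} := by
        simp only [Set.mem_setOf_eq, Vf, Matrix.mulVec_zero, dotProduct_zero]
        · exact hδ0
      filter_upwards [hU.mem_nhds h0U] with x hxU
      rcases eq_or_ne x 0 with rfl | hx
      · simpa using hε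
      · rw [if_neg hx]
        have hVx : Vf G P x 0 < δ := hxU
        have hVpos : 0 < Vf G P x 0 := Vf_pos hP hx 0
        have hW0neg : W x 0 < 0 := by
          rw [hW]; simp only
          exact (Real.log_neg_iff hVpos).2 (lt_of_lt_of_le hVx (min_le_right _ _))
        have hsneg : sfun x < 0 := by
          by_contra hcon
          push_neg at hcon
          rcases eq_or_lt_of_le hcon with heq | hlt
          · have hz := hWzero x hx
            rw [← heq] at hz
            linarith
          · have := hWanti x hx hlt
            rw [hWzero x hx] at this
            linarith
        have hmono := hWh x hx (le_of_lt hsneg)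
        simp only [mul_zero, add_zero] at hmono
        rw [hWzero x hx] at hmono
        simp only [zero_add] at hmono
        -- β * sfun x ≤ W x 0 < β * log ε
        have hWlt : W x 0 < β * Real.log ε := by
          rw [hW]; simp only
          have h1 : Vf G P x 0 < Real.exp (β * Real.log ε) :=
            lt_of_lt_of_le hVx (min_le_left _ _)
          calc Real.log (Vf G P x 0) < Real.log (Real.exp (β * Real.log ε)) :=
                Real.log_lt_log hVpos h1
            _ = β * Real.log ε := Real.log_exp _
        have hslt : sfun x < Real.log ε := by
          have : β * sfun x < β * Real.log ε := lt_of_le_of_lt hmono hWlt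
          exact lt_of_mul_lt_mul_left this (le_of_lt hβ0)
        have : Real.exp (sfun x) < ε := by
          calc Real.exp (sfun x) < Real.exp (Real.log ε) := Real.exp_lt_exp.2 hslt
            _ = ε := Real.exp_log hε
        rw [Real.dist_eq, sub_zero, abs_of_pos (Real.exp_pos _)]
        exact this
    · -- continuity at x₀ ≠ 0
      have hev : ∀ᶠ x in nhds x₀, x ≠ 0 :=
        eventually_ne_nhds hx₀
      have hcongr : (fun x : Fin n → ℝ => if x = 0 then (0:ℝ) else Real.exp (sfun x))
          =ᶠ[nhds x₀] (fun x => Real.exp (sfun x)) := by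
        filter_upwards [hev] with x hx
        rw [if_neg hx]
      rw [ContinuousAt]
      have hval : (if x₀ = 0 then (0:ℝ) else Real.exp (sfun x₀)) = Real.exp (sfun x₀) :=
        if_neg hx₀
      rw [hval]
      apply Filter.Tendsto.congr' hcongr.symm
      -- suffices: sfun continuous at x₀
      have hsc : Filter.Tendsto sfun (nhds x₀) (nhds (sfun x₀)) := by
        rw [Metric.tendsto_nhds]
        intro ε hε
        set s₀ : ℝ := sfun x₀ with hs₀
        set ε' : ℝ := ε / 2 with hε'
        have hε'0 : 0 < ε' := by positivity
        have hVcont1 : Continuous (fun x : Fin n → ℝ => Vf G P x (s₀ + ε')) := by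
          simp only [Vf, dotProduct, mulVec, dotProduct]
          fun_prop
        have hVcont2 : Continuous (fun x : Fin n → ℝ => Vf G P x (s₀ - ε')) := by
          simp only [Vf, dotProduct, mulVec, dotProduct]
          fun_prop
        have hU : IsOpen {x : Fin n → ℝ | Vf G P x (s₀ + ε') < 1 ∧ 1 < Vf G P x (s₀ - ε')} :=
          (isOpen_lt hVcont1 continuous_const).inter (isOpen_lt continuous_const hVcont2)
        have hx₀U : x₀ ∈ {x : Fin n → ℝ | Vf G P x (s₀ + ε') < 1 ∧ 1 < Vf G P x (s₀ - ε')} := by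
          have h1 : W x₀ (s₀ + ε') < 0 := by
            have := hWanti x₀ hx₀ (show s₀ < s₀ + ε' by linarith)
            rw [hWzero x₀ hx₀] at this
            linarith
          have h2 : 0 < W x₀ (s₀ - ε') := by
            have := hWanti x₀ hx₀ (show s₀ - ε' < s₀ by linarith)
            rw [hWzero x₀ hx₀] at this
            linarith
          constructor
          · exact (Real.log_neg_iff (Vf_pos hP hx₀ _)).1 h1
          · exact (Real.log_pos_iff (Vf_pos hP hx₀ _).le).1 h2
        filter_upwards [hU.mem_nhds hx₀U, hev] with x hxU hx
        obtain ⟨hu1, hu2⟩ := hxU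
        have hW1 : W x (s₀ + ε') < 0 := (Real.log_neg_iff (Vf_pos hP hx _)).2 hu1
        have hW2 : 0 < W x (s₀ - ε') := (Real.log_pos_iff (Vf_pos hP hx _).le).2 hu2
        have hlt1 : sfun x < s₀ + ε' := by
          by_contra hcon
          push_neg at hcon
          rcases eq_or_lt_of_le hcon with heq | hlt
          · have hz := hWzero x hx
            rw [← heq] at hz
            linarith
          · have := hWanti x hx hlt
            rw [hWzero x hx] at this
            linarith
        have hlt2 : s₀ - ε' < sfun x := by
          by_contra hcon
          push_neg at hcon
          rcases eq_or_lt_of_le hcon with heq | hlt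
          · have hz := hWzero x hx
            rw [heq] at hz
            linarith
          · have := hWanti x hx hlt
            rw [hWzero x hx] at this
            linarith
        rw [Real.dist_eq, abs_lt]
        constructor <;> [linarith; linarith]
      exact (Real.continuous_exp.continuousAt).comp hsc
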